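/- With Υ_t = √(ᾱ_t)(1 - Λ_t) (componentwise, Λ_t ∈ (0,1)) and λ_t = σ_t/Υ_t, the first-order sampler update x_t = Υ_t[(λ_t²/λ_s²)(x_s/Υ_s) + (Λ_t/(1-Λ_t) - (Λ_s/(1-Λ_s))(λ_t²/λ_s²))·x̂ + (1 - λ_t²/λ_s²)·x̃] is exact when the state is on the noiseless mixture manifold: if x_s = √(ᾱ_s)·(Λ_s x̂ + (1-Λ_s)x̃) then the deterministic update yields x_t = √(ᾱ_t)·(Λ_t x̂ + (1-Λ_t)x̃). -/

import Mathlib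

/-- Consistency of the deterministic first-order sampler update on the noiseless
mixture manifold: with `Υ_r = √ᾱ_r(1-Λ_r)`, `λ_r = σ_r/Υ_r`, `σ_r = √(1-ᾱ_r)`,
if `x_s = √ᾱ_s·(Λ_s x̂ + (1-Λ_s)x̃)` then the update yields
`x_t = √ᾱ_t·(Λ_t x̂ + (1-Λ_t)x̃)`. -/
theorem first_order_sampler_consistency
    (abars abart Λs Λt : ℝ)
    (habars : abars ∈ Set.Ioo (0 : ℝ) 1) (habart : abart ∈ Set.Ioo (0 : ℝ) 1)
    (hΛs : Λs ∈ Set.Ioo (0 : ℝ) 1) (hΛt : Λt ∈ Set.Ioo (0 : ℝ) 1)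
    (σs σt Υs Υt lams lamt : ℝ)
    (hσs : σs = Real.sqrt (1 - abars)) (hσt : σt = Real.sqrt (1 - abart))
    (hΥs : Υs = Real.sqrt abars * (1 - Λs)) (hΥt : Υt = Real.sqrt abart * (1 - Λt))
    (hlams : lams = σs / Υs) (hlamt : lamt = σt / Υt)
    (xsrc xtil xs xt : ℝ)
    (hxs : xs = Real.sqrt abars * (Λs * xsrc + (1 - Λs) * xtil))
    (hxt : xt = Υt * ((lamt ^ 2 / lams ^ 2) * (xs / Υs)
        + (Λt / (1 - Λt) - (Λs / (1 - Λs)) * (lamt ^ 2 / lams ^ 2)) * xsrc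
        + (1 - lamt ^ 2 / lams ^ 2) * xtil)) :
    xt = Real.sqrt abart * (Λt * xsrc + (1 - Λt) * xtil) := by

  obtain ⟨ha0, ha1⟩ := habars
  obtain ⟨hl0, hl1⟩ := hΛs
  obtain ⟨ht0, ht1⟩ := hΛt
  have hsq : Real.sqrt abars > 0 := Real.sqrt_pos.mpr ha0
  have h1Λs' : (0:ℝ) < 1 - Λs := by linarith
  have hΥs0 : Υs ≠ 0 := by rw [hΥs]; positivity
  have hσs0 : σs ≠ 0 := by
    rw [hσs]
    have : (0:ℝ) < 1 - abars := by linarith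
    positivity
  have hlams0 : lams ≠ 0 := by rw [hlams]; exact div_ne_zero hσs0 hΥs0
  have h1Λs : (1:ℝ) - Λs ≠ 0 := by linarith
  have h1Λt : (1:ℝ) - Λt ≠ 0 := by linarith
  have hxsY : xs / Υs = Λs / (1 - Λs) * xsrc + xtil := by
    rw [hxs, hΥs]; field_simp
  rw [hxt, hxsY, hΥt]
  have hr : lamt ^ 2 / lams ^ 2 * (Λs / (1 - Λs) * xsrc + xtil)
      + (Λt / (1 - Λt) - Λs / (1 - Λs) * (lamt ^ 2 / lams ^ 2)) * xsrc
      + (1 - lamt ^ 2 / lams ^ 2) * xtil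
      = Λt / (1 - Λt) * xsrc + xtil := by
    field_simp
    ring
  rw [hr]
  field_simp
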